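/- For the half-line quantum walk at even times, the return probabilities in the two coin states coincide: P(X_{2t}^{HL} = 0; 0) = P(X_{2t}^{HL} = 0; 1) for all t ≥ 1, i.e. |α_{2t}(0)|² = |β_{2t}(0)|². -/

import Mathlib

noncomputable def halfWalk (θ : ℝ) : ℕ → (ℕ → ℂ) × (ℕ → ℂ)
  | 0 =>
      (fun x => if x = 0 then Complex.exp (-(θ : ℂ) * Complex.I) / (Real.sqrt 2 : ℂ) else 0,
       fun x => if x = 0 then Complex.I * Complex.exp (-(θ : ℂ) * Complex.I) / (Real.sqrt 2 : ℂ) else 0)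
  | t + 1 =>
      (fun x => (Real.cos θ : ℂ) * (halfWalk θ t).1 (x + 1) + (Real.sin θ : ℂ) * (halfWalk θ t).2 (x + 1),
       fun x =>
         if x = 0 then (Real.cos θ : ℂ) * (halfWalk θ t).1 0 + (Real.sin θ : ℂ) * (halfWalk θ t).2 0
         else (Real.sin θ : ℂ) * (halfWalk θ t).1 (x - 1) - (Real.cos θ : ℂ) * (halfWalk θ t).2 (x - 1))

lemma halfWalk_key (θ : ℝ) : ∀ t : ℕ,
    (∀ x : ℕ, Odd (x + t) →
      (halfWalk θ t).1 x = Complex.I * (halfWalk θ t).1 (x + 1) ∧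
      (halfWalk θ t).2 x = Complex.I * (halfWalk θ t).2 (x + 1)) ∧
    (Even t → (halfWalk θ t).2 0 = Complex.I * (halfWalk θ t).1 0) := by
  intro t
  induction t with
  | zero =>
    constructor
    · intro x hx
      have hx0 : x ≠ 0 := by
        rintro rfl; simp [Nat.odd_iff] at hx
      have hx1 : x + 1 ≠ 0 := by omega
      simp [halfWalk, hx0, hx1]
    · intro _
      simp only [halfWalk, if_true]
      rw [mul_div_assoc]
  | succ t ih =>
    obtain ⟨IH1, IH2⟩ := ih
    constructor
    · intro x hx
      have hx' : Odd (x + 1 + t) := by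
        rw [Nat.odd_iff] at hx ⊢; omega
      constructor
      · obtain ⟨h1, h2⟩ := IH1 (x + 1) hx'
        simp only [halfWalk]
        rw [h1, h2]; ring
      · cases x with
        | zero =>
          have hte : Even t := by
            rw [Nat.odd_iff] at hx; rw [Nat.even_iff]; omega
          have hb0 := IH2 hte
          simp only [halfWalk]
          rw [if_true, if_neg (by omega : (0 : ℕ) + 1 ≠ 0)]
          simp only [Nat.add_sub_cancel, hb0]
          ring_nf
          rw [Complex.I_sq]
          ring
        | succ y =>
          have hy : Odd (y + t) := by
            rw [Nat.odd_iff] at hx ⊢; omega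
          obtain ⟨h1, h2⟩ := IH1 y hy
          simp only [halfWalk]
          rw [if_neg (by omega : y + 1 ≠ 0), if_neg (by omega : y + 1 + 1 ≠ 0)]
          simp only [Nat.add_sub_cancel]
          rw [h1, h2]; ring
    · intro hev
      have hto : Odd (0 + t) := by
        rw [Nat.even_iff] at hev; rw [Nat.odd_iff]; omega
      obtain ⟨h1, h2⟩ := IH1 0 hto
      simp only [halfWalk]
      rw [if_true, h1, h2]
      ring

theorem half_line_return_probabilities_equal (θ : ℝ) (hθ : θ ∈ Set.Ico 0 (2 * Real.pi))
    (h0 : θ ≠ 0) (hπ : θ ≠ Real.pi) :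
    ∀ t : ℕ, 1 ≤ t →
      ‖(halfWalk θ (2 * t)).1 0‖ ^ 2
        = ‖(halfWalk θ (2 * t)).2 0‖ ^ 2 := by
  intro t _
  have h := (halfWalk_key θ (2 * t)).2 ⟨t, by ring⟩
  rw [h, norm_mul, Complex.norm_I, one_mul]
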